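/- Fix an integer K ≥ 2 and reals w(i,j) for distinct i, j ∈ {1,…,K} with w(i,j) ≥ w(j,i) whenever i < j. For a permutation σ of {1,…,K}, define cost_w(σ) = Σ over ordered pairs (i,j) with i ≠ j and σ(j) < σ(i) of w(i,j). Fix n ∈ {1,…,K−1} and assume in addition that w(i,j) − w(j,i) ≥ w(n,n+1) − w(n+1,n) for all i, j with 1 ≤ i ≤ n < j ≤ K. Then the minimum of cost_w(σ), over permutations σ for which there exist i ≤ n < j with σ(j) < σ(i), equals Σ over ordered pairs (i,j) with i > j of w(i,j) plus (w(n,n+1) − w(n+1,n)). -/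

import Mathlib

/-- `cost_w(σ) = ∑_{(i,j) : i ≠ j, σ(j) < σ(i)} w i j`, the (rescaled) negative
log-likelihood of the ranking `σ` under an Ordinal Attraction choice model,
where `σ i` is the position of item `i`. -/
def cost {K : ℕ} (w : Fin K → Fin K → ℝ) (σ : Equiv.Perm (Fin K)) : ℝ :=
  ∑ q ∈ Finset.univ.filter (fun q : Fin K × Fin K => q.1 ≠ q.2 ∧ σ q.2 < σ q.1),
    w q.1 q.2

/-- Generalized likelihood ratio for the partition criterion: with items
0-indexed and the partition placing items `{0,…,n−1}` above `{n,…,K−1}`, and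
assuming `w i j − w j i ≥ w (n−1) n − w n (n−1)` for all `i < n ≤ j`, the
minimum of `cost_w(σ)` over rankings violating the partition equals
`∑_{i > j} w i j + (w (n−1) n − w n (n−1))`. -/
theorem stmt15 (K : ℕ) (hK : 2 ≤ K) (w : Fin K → Fin K → ℝ)
    (hw : ∀ i j : Fin K, i < j → w j i ≤ w i j)
    (n : ℕ) (hn1 : 1 ≤ n) (hn2 : n < K)
    (hdom : ∀ i j : Fin K, (i : ℕ) < n → n ≤ (j : ℕ) →
      w (⟨n - 1, by omega⟩ : Fin K) ⟨n, hn2⟩ - w ⟨n, hn2⟩ (⟨n - 1, by omega⟩ : Fin K)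
        ≤ w i j - w j i) :
    IsLeast { c : ℝ | ∃ σ : Equiv.Perm (Fin K),
        (∃ i j : Fin K, (i : ℕ) < n ∧ n ≤ (j : ℕ) ∧ σ j < σ i) ∧ c = cost w σ }
      ((∑ q ∈ Finset.univ.filter (fun q : Fin K × Fin K => q.2 < q.1), w q.1 q.2)
        + (w (⟨n - 1, by omega⟩ : Fin K) ⟨n, hn2⟩
            - w ⟨n, hn2⟩ (⟨n - 1, by omega⟩ : Fin K))) := by
  have hn1K : n - 1 < K := by omega
  set a : Fin K := ⟨n - 1, hn1K⟩ with ha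
  set b : Fin K := ⟨n, hn2⟩ with hb
  have hav : (a : ℕ) = n - 1 := by rw [ha]
  have hbv : (b : ℕ) = n := by rw [hb]
  have hab : a < b := by rw [Fin.lt_def]; omega
  have key : ∀ σ : Equiv.Perm (Fin K),
      cost w σ = (∑ q ∈ Finset.univ.filter (fun q : Fin K × Fin K => q.2 < q.1), w q.1 q.2)
        + ∑ q ∈ Finset.univ.filter
            (fun q : Fin K × Fin K => q.2 < q.1 ∧ σ q.1 < σ q.2),
            (w q.2 q.1 - w q.1 q.2) := by
    intro σ
    have hinj := σ.injective
    have hsplit1 :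
        (Finset.univ.filter (fun q : Fin K × Fin K => q.1 ≠ q.2 ∧ σ q.2 < σ q.1))
        = (Finset.univ.filter (fun q : Fin K × Fin K => q.2 < q.1 ∧ σ q.2 < σ q.1))
          ∪ (Finset.univ.filter (fun q : Fin K × Fin K => q.1 < q.2 ∧ σ q.2 < σ q.1)) := by
      ext q
      simp only [Finset.mem_filter, Finset.mem_union, Finset.mem_univ, true_and]
      constructor
      · rintro ⟨h1, h2⟩
        rcases lt_or_gt_of_ne h1 with h | h
        · exact Or.inr ⟨h, h2⟩
        · exact Or.inl ⟨h, h2⟩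
      · rintro (⟨h1, h2⟩ | ⟨h1, h2⟩)
        · exact ⟨h1.ne', h2⟩
        · exact ⟨h1.ne, h2⟩
    have hdisj1 : Disjoint
        (Finset.univ.filter (fun q : Fin K × Fin K => q.2 < q.1 ∧ σ q.2 < σ q.1))
        (Finset.univ.filter (fun q : Fin K × Fin K => q.1 < q.2 ∧ σ q.2 < σ q.1)) := by
      rw [Finset.disjoint_left]
      intro q hq1 hq2
      simp only [Finset.mem_filter] at hq1 hq2
      exact absurd hq2.2.1 (not_lt.mpr hq1.2.1.le)
    have hswap :
        ∑ q ∈ Finset.univ.filter (fun q : Fin K × Fin K => q.1 < q.2 ∧ σ q.2 < σ q.1),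
          w q.1 q.2
        = ∑ q ∈ Finset.univ.filter (fun q : Fin K × Fin K => q.2 < q.1 ∧ σ q.1 < σ q.2),
          w q.2 q.1 := by
      apply Finset.sum_nbij' (i := Prod.swap) (j := Prod.swap) <;>
        simp [and_comm]
    have hsplit2 :
        (Finset.univ.filter (fun q : Fin K × Fin K => q.2 < q.1))
        = (Finset.univ.filter (fun q : Fin K × Fin K => q.2 < q.1 ∧ σ q.2 < σ q.1))
          ∪ (Finset.univ.filter (fun q : Fin K × Fin K => q.2 < q.1 ∧ σ q.1 < σ q.2)) := by
      ext q
      simp only [Finset.mem_filter, Finset.mem_union, Finset.mem_univ, true_and]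
      constructor
      · intro h
        rcases lt_or_gt_of_ne (fun he => h.ne (hinj he) : σ q.2 ≠ σ q.1) with h' | h'
        · exact Or.inl ⟨h, h'⟩
        · exact Or.inr ⟨h, h'⟩
      · rintro (⟨h1, _⟩ | ⟨h1, _⟩) <;> exact h1
    have hdisj2 : Disjoint
        (Finset.univ.filter (fun q : Fin K × Fin K => q.2 < q.1 ∧ σ q.2 < σ q.1))
        (Finset.univ.filter (fun q : Fin K × Fin K => q.2 < q.1 ∧ σ q.1 < σ q.2)) := by
      rw [Finset.disjoint_left]
      intro q hq1 hq2
      simp only [Finset.mem_filter] at hq1 hq2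
      exact absurd hq2.2.2 (not_lt.mpr hq1.2.2.le)
    rw [cost, hsplit1, Finset.sum_union hdisj1, hswap, hsplit2, Finset.sum_union hdisj2,
      Finset.sum_sub_distrib]
    ring
  constructor
  · -- membership: the swap of a and b
    refine ⟨Equiv.swap a b, ⟨a, b, by omega, by omega, ?_⟩, ?_⟩
    · rw [Equiv.swap_apply_left, Equiv.swap_apply_right]; exact hab
    · rw [key]
      congr 1
      have hset : Finset.univ.filter
          (fun q : Fin K × Fin K => q.2 < q.1 ∧ Equiv.swap a b q.1 < Equiv.swap a b q.2)
          = {(b, a)} := by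
        ext ⟨i, j⟩
        simp only [Finset.mem_filter, Finset.mem_univ, true_and, Finset.mem_singleton,
          Prod.mk.injEq]
        simp only [Equiv.swap_apply_def]
        constructor
        · rintro ⟨h1, h2⟩
          split_ifs at h2 <;>
            (simp only [Fin.lt_def, Fin.ext_iff] at * <;> omega)
        · rintro ⟨rfl, rfl⟩
          exact ⟨hab, by simpa [hab.ne'] using hab⟩
      rw [hset, Finset.sum_singleton]
  · -- lower bound
    rintro c ⟨σ, ⟨i, j, hi, hj, hinv⟩, rfl⟩
    rw [key σ]
    have hij : i < j := by rw [Fin.lt_def]; omega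
    have hmem : (j, i) ∈ Finset.univ.filter
        (fun q : Fin K × Fin K => q.2 < q.1 ∧ σ q.1 < σ q.2) := by
      simp [hij, hinv]
    have hnn : ∀ q ∈ Finset.univ.filter
        (fun q : Fin K × Fin K => q.2 < q.1 ∧ σ q.1 < σ q.2),
        0 ≤ w q.2 q.1 - w q.1 q.2 := by
      intro q hq
      simp only [Finset.mem_filter] at hq
      have := hw q.2 q.1 hq.2.1
      linarith
    have h1 : w i j - w j i ≤ ∑ q ∈ Finset.univ.filter
        (fun q : Fin K × Fin K => q.2 < q.1 ∧ σ q.1 < σ q.2),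
        (w q.2 q.1 - w q.1 q.2) := Finset.single_le_sum hnn hmem
    have h2 := hdom i j hi hj
    linarith
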